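/- Let A : ℝ^d → ℝ be convex differentiable with L_p-Lipschitz p-th derivatives (p ≥ 2), minimizer x^*, and let M ≥ L_p. Then for T iterations of the Tensor Extragradient Method started at x^0, min_{t < T} ‖∇A(x^{t+1/2})‖ ≤ (p^p M^p / (p!(pM − L_p)^{p/2}(pM + L_p)^{p/2−1})) · ‖x^0 − x^*‖^p / T^{p/2}. -/

import Mathlib

set_option maxHeartbeats 1000000

open Finset

/-- The `p`-th order Taylor polynomial of `A` at `z`, evaluated at `x`. -/
noncomputable def taylorApprox {d : ℕ} (p : ℕ) (A : EuclideanSpace ℝ (Fin d) → ℝ)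
    (z x : EuclideanSpace ℝ (Fin d)) : ℝ :=
  ∑ i ∈ Finset.range (p + 1),
    (1 / (Nat.factorial i : ℝ)) * iteratedFDeriv ℝ i A z (fun _ => x - z)

section Symm
variable {E : Type} [NormedAddCommGroup E] [NormedSpace ℝ E]

lemma swap_last {F : Type} [NormedAddCommGroup F] [NormedSpace ℝ F]
    (k : ℕ) (f : E → F) (hf : ContDiff ℝ ((k + 1 + 1 : ℕ) : WithTop ℕ∞) f) (x : E)
    (m : Fin k → E) (a b : E) :
    iteratedFDeriv ℝ (k + 1 + 1) f x (Fin.snoc (Fin.snoc m a) b)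
      = iteratedFDeriv ℝ (k + 1 + 1) f x (Fin.snoc (Fin.snoc m b) a) := by
  have hf1 : Differentiable ℝ f :=
    hf.differentiable (by simp)
  have hg : ContDiff ℝ ((k + 1 : ℕ) : WithTop ℕ∞) (fderiv ℝ f) :=
    hf.fderiv_right (by exact_mod_cast le_refl _)
  have hg1 : Differentiable ℝ (fderiv ℝ f) :=
    hg.differentiable (by simp)
  have hh : ContDiff ℝ ((k : ℕ) : WithTop ℕ∞) (fderiv ℝ (fderiv ℝ f)) :=
    hg.fderiv_right (by exact_mod_cast le_refl _)
  have key : ∀ (a b : E), iteratedFDeriv ℝ (k + 1 + 1) f x (Fin.snoc (Fin.snoc m a) b)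
      = iteratedFDeriv ℝ k (fderiv ℝ (fun y => fderiv ℝ f y)) x m a b := by
    intro a b
    rw [iteratedFDeriv_succ_apply_right, Fin.init_snoc, Fin.snoc_last,
      iteratedFDeriv_succ_apply_right, Fin.init_snoc, Fin.snoc_last]
  rw [key, key]
  have hsymm : ∀ y : E, ∀ u v : E,
      fderiv ℝ (fun z => fderiv ℝ f z) y u v = fderiv ℝ (fun z => fderiv ℝ f z) y v u := by
    intro y u v
    exact second_derivative_symmetric (fun z => (hf1 z).hasFDerivAt)
      ((hg1 y).hasFDerivAt) u v
  set Φ : (E →L[ℝ] E →L[ℝ] F) →L[ℝ] (E →L[ℝ] E →L[ℝ] F) :=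
    (ContinuousLinearMap.flipₗᵢ ℝ E E F).toLinearIsometry.toContinuousLinearMap with hΦ
  have hΦapp : ∀ (T : E →L[ℝ] E →L[ℝ] F) (u v : E), Φ T u v = T v u := fun _ _ _ => rfl
  have hfun : (⇑Φ ∘ (fun y => fderiv ℝ (fun z => fderiv ℝ f z) y))
      = (fun y => fderiv ℝ (fun z => fderiv ℝ f z) y) := by
    funext y
    ext u v
    rw [Function.comp_apply, hΦapp]
    exact hsymm y v u
  have hcomp := ContinuousLinearMap.iteratedFDeriv_comp_left
    (G := E →L[ℝ] E →L[ℝ] F) Φ (x := x) hh.contDiffAt (i := k) le_rfl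
  rw [hfun] at hcomp
  have happ := congrArg
    (fun (T : ContinuousMultilinearMap ℝ (fun _ : Fin k => E) (E →L[ℝ] E →L[ℝ] F)) => T m) hcomp
  simp only [ContinuousLinearMap.compContinuousMultilinearMap_coe, Function.comp_apply] at happ
  calc iteratedFDeriv ℝ k (fderiv ℝ (fun y => fderiv ℝ f y)) x m a b
      = Φ (iteratedFDeriv ℝ k (fderiv ℝ (fun y => fderiv ℝ f y)) x m) a b := by rw [← happ]
    _ = iteratedFDeriv ℝ k (fderiv ℝ (fun y => fderiv ℝ f y)) x m b a := by rw [hΦapp]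

lemma symm_diag : ∀ (i : ℕ) {F : Type} [NormedAddCommGroup F] [NormedSpace ℝ F]
    (f : E → F), ContDiff ℝ ((i + 1 : ℕ) : WithTop ℕ∞) f → ∀ (x v w : E) (j : Fin (i + 1)),
    iteratedFDeriv ℝ (i + 1) f x (Function.update (fun _ => v) j w)
      = iteratedFDeriv ℝ (i + 1) f x (Fin.snoc (fun _ => v) w) := by
  intro i
  induction i with
  | zero =>
    intro F _ _ f hf x v w j
    congr 1
    funext k
    have hk : k = j := Fin.ext (by have h1 := k.isLt; have h2 := j.isLt; omega)
    subst hk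
    simp [Fin.snoc]
  | succ i ih =>
    intro F _ _ f hf x v w j
    rcases eq_or_ne j (Fin.last (i+1)) with hj | hj
    · subst hj
      congr 1
      funext k
      induction k using Fin.lastCases with
      | last => simp
      | cast k' =>
        have hne : (k'.castSucc : Fin (i+1+1)) ≠ Fin.last (i+1) := (Fin.castSucc_lt_last k').ne
        simp [Function.update_of_ne hne]
    · obtain ⟨j', rfl⟩ : ∃ j' : Fin (i+1), j'.castSucc = j := by
        rcases Fin.eq_castSucc_or_eq_last j with ⟨j', rfl⟩ | h
        · exact ⟨j', rfl⟩
        · exact absurd h hj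
      have hg : ContDiff ℝ ((i + 1 : ℕ) : WithTop ℕ∞) (fderiv ℝ f) :=
        hf.fderiv_right (by exact_mod_cast le_refl _)
      have hinit : Fin.init (Function.update (fun _ : Fin (i+1+1) => v) j'.castSucc w)
          = Function.update (fun _ : Fin (i+1) => v) j' w := by
        funext k
        simp only [Fin.init, Function.update_apply]
        by_cases hk : k = j'
        · subst hk; simp
        · rw [if_neg (by simpa using hk), if_neg hk]
      have hlastv : (Function.update (fun _ : Fin (i+1+1) => v) j'.castSucc w) (Fin.last (i+1)) = v :=
        Function.update_of_ne (fun h => hj h.symm) _ _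
      have eL : iteratedFDeriv ℝ (i+1+1) f x (Function.update (fun _ => v) j'.castSucc w)
          = iteratedFDeriv ℝ (i+1) (fun y => fderiv ℝ f y) x
              (Function.update (fun _ => v) j' w) v := by
        rw [iteratedFDeriv_succ_apply_right, hinit, hlastv]
      have eR : iteratedFDeriv ℝ (i+1+1) f x (Fin.snoc (Fin.snoc (fun _ => v) w) v)
          = iteratedFDeriv ℝ (i+1) (fun y => fderiv ℝ f y) x (Fin.snoc (fun _ => v) w) v := by
        rw [iteratedFDeriv_succ_apply_right, Fin.init_snoc, Fin.snoc_last]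
      rw [eL, ih (fderiv ℝ f) hg x v w j', ← eR, swap_last i f hf x (fun _ => v) w v]
      congr 1
      funext k
      induction k using Fin.lastCases with
      | last => simp
      | cast k' =>
        simp only [Fin.snoc_castSucc]
        induction k' using Fin.lastCases with
        | last => simp
        | cast k'' => simp
end Symm

section Taylor
variable {E : Type} [NormedAddCommGroup E] [NormedSpace ℝ E]

lemma taylor_rem : ∀ (q : ℕ) {F : Type} [NormedAddCommGroup F] [NormedSpace ℝ F]
    (f : E → F), ContDiff ℝ ((q : ℕ) : WithTop ℕ∞) f → ∀ {L : ℝ}, 0 ≤ L →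
    (∀ x y, ‖iteratedFDeriv ℝ q f x - iteratedFDeriv ℝ q f y‖ ≤ L * ‖x - y‖) →
    ∀ (x v : E),
    ‖f (x + v) - ∑ i ∈ range (q+1),
        ((Nat.factorial i : ℝ))⁻¹ • iteratedFDeriv ℝ i f x (fun _ => v)‖
      ≤ L * ‖v‖^(q+1) / (Nat.factorial (q+1) : ℝ) := by
  intro q
  induction q with
  | zero =>
    intro F _ _ f hf L hL hLip x v
    have h0 : ∑ i ∈ range 1, ((Nat.factorial i : ℝ))⁻¹ • iteratedFDeriv ℝ i f x (fun _ => v)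
        = f x := by
      simp [iteratedFDeriv_zero_apply]
    rw [h0]
    have h1 : f (x + v) - f x
        = (iteratedFDeriv ℝ 0 f (x+v) - iteratedFDeriv ℝ 0 f x) (fun _ : Fin 0 => v) := by
      simp [iteratedFDeriv_zero_apply]
    rw [h1]
    calc ‖(iteratedFDeriv ℝ 0 f (x+v) - iteratedFDeriv ℝ 0 f x) (fun _ : Fin 0 => v)‖
        ≤ ‖iteratedFDeriv ℝ 0 f (x+v) - iteratedFDeriv ℝ 0 f x‖ * ∏ _i : Fin 0, ‖v‖ :=
          ContinuousMultilinearMap.le_opNorm _ _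
      _ = ‖iteratedFDeriv ℝ 0 f (x+v) - iteratedFDeriv ℝ 0 f x‖ := by simp
      _ ≤ L * ‖x + v - x‖ := hLip _ _
      _ = L * ‖v‖ ^ 1 / (Nat.factorial 1 : ℝ) := by
          simp [add_sub_cancel_left]
  | succ q ih =>
    intro F _ _ f hf L hL hLip x v
    set g := fun y => fderiv ℝ f y with hgdef
    have hfd : Differentiable ℝ f :=
      hf.differentiable (by simp)
    have hg : ContDiff ℝ ((q : ℕ) : WithTop ℕ∞) g :=
      hf.fderiv_right (by exact_mod_cast le_refl _)
    -- transfer of the Lipschitz property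
    have hLipg : ∀ x' y', ‖iteratedFDeriv ℝ q g x' - iteratedFDeriv ℝ q g y'‖ ≤ L * ‖x' - y'‖ := by
      intro x' y'
      have e : ∀ z, iteratedFDeriv ℝ (q+1) f z
          = (continuousMultilinearCurryRightEquiv' ℝ q E F).symm (iteratedFDeriv ℝ q g z) := by
        intro z
        rw [iteratedFDeriv_succ_eq_comp_right]
        rfl
      have := hLip x' y'
      rw [e, e, ← LinearIsometryEquiv.map_sub, LinearIsometryEquiv.norm_map] at this
      exact this
    have hIH := fun (u : E) => ih g hg hL hLipg x u
    -- the auxiliary function and its derivative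
    set c : ℕ → F := fun i => iteratedFDeriv ℝ i f x (fun _ => v) with hc
    set φ : ℝ → F := fun t => f (x + t • v) - ∑ i ∈ range (q+2), (t^i / (Nat.factorial i : ℝ)) • c i with hφ
    set ψ : ℝ → F := fun t =>
      (g (x + t • v) - ∑ j ∈ range (q+1),
        (t^j / (Nat.factorial j : ℝ)) • iteratedFDeriv ℝ j g x (fun _ => v)) v with hψ
    have hline : ∀ t : ℝ, HasDerivAt (fun s : ℝ => x + s • v) v t := by
      intro t
      simpa using ((hasDerivAt_id t).smul_const v).const_add x
    have hφ' : ∀ t : ℝ, HasDerivAt φ (ψ t) t := by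
      intro t
      have h1 : HasDerivAt (fun s : ℝ => f (x + s • v)) (g (x + t • v) v) t :=
        (hfd (x + t • v)).hasFDerivAt.comp_hasDerivAt t (hline t)
      have h2 : HasDerivAt (fun s : ℝ => ∑ i ∈ range (q+2), (s^i / (Nat.factorial i : ℝ)) • c i)
          (∑ i ∈ range (q+2), ((i : ℝ) * t^(i-1) / (Nat.factorial i : ℝ)) • c i) t := by
        apply HasDerivAt.fun_sum
        intro i _
        exact (((hasDerivAt_pow i t).div_const (Nat.factorial i : ℝ)).smul_const (c i))
      have h3 : ∑ i ∈ range (q+2), ((i : ℝ) * t^(i-1) / (Nat.factorial i : ℝ)) • c i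
          = ∑ j ∈ range (q+1), (t^j / (Nat.factorial j : ℝ)) • (iteratedFDeriv ℝ j g x (fun _ => v)) v := by
        rw [Finset.sum_range_succ']
        simp only [Nat.cast_zero, zero_mul, zero_div, zero_smul, add_zero]
        apply Finset.sum_congr rfl
        intro j _
        have e1 : c (j+1) = (iteratedFDeriv ℝ j g x (fun _ => v)) v := by
          show iteratedFDeriv ℝ (j+1) f x (fun _ => v) = _
          rw [iteratedFDeriv_succ_apply_right]
          rfl
        rw [e1]
        congr 1
        rw [Nat.factorial_succ]
        push_cast
        have hj : (0:ℝ) < (Nat.factorial j : ℝ) := by exact_mod_cast Nat.factorial_pos j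
        field_simp
      have := h1.sub h2
      rw [h3] at this
      refine this.congr_deriv (Eq.symm ?_)
      rw [hψ]
      simp only [ContinuousLinearMap.coe_sub', Pi.sub_apply, ContinuousLinearMap.coe_sum',
        Finset.sum_apply, ContinuousLinearMap.coe_smul', Pi.smul_apply]
    -- bound on the derivative
    have hbound : ∀ t ∈ Set.Icc (0:ℝ) 1,
        ‖ψ t‖ ≤ L * ‖v‖^(q+2) / (Nat.factorial (q+1) : ℝ) * t^(q+1) := by
      intro t ht
      have key : ∑ j ∈ range (q+1), (t^j / (Nat.factorial j : ℝ)) • iteratedFDeriv ℝ j g x (fun _ => v)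
          = ∑ j ∈ range (q+1), ((Nat.factorial j : ℝ))⁻¹ • iteratedFDeriv ℝ j g x (fun _ => t • v) := by
        apply Finset.sum_congr rfl
        intro j _
        have : iteratedFDeriv ℝ j g x (fun _ => t • v) = t^j • iteratedFDeriv ℝ j g x (fun _ => v) := by
          have := (iteratedFDeriv ℝ j g x).toMultilinearMap.map_smul_univ (fun _ => t) (fun _ => v)
          simpa [Finset.prod_const] using this
        rw [this, smul_smul]
        congr 1
        rw [div_eq_mul_inv, mul_comm]
      have h4 : ‖ψ t‖ ≤ ‖g (x + t • v) - ∑ j ∈ range (q+1),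
          (t^j / (Nat.factorial j : ℝ)) • iteratedFDeriv ℝ j g x (fun _ => v)‖ * ‖v‖ :=
        ContinuousLinearMap.le_opNorm _ _
      rw [key] at h4
      have h5 := hIH (t • v)
      calc ‖ψ t‖ ≤ L * ‖t • v‖^(q+1) / (Nat.factorial (q+1) : ℝ) * ‖v‖ :=
            h4.trans (mul_le_mul_of_nonneg_right h5 (norm_nonneg v))
        _ = L * (|t|^(q+1) * ‖v‖^(q+1)) / (Nat.factorial (q+1) : ℝ) * ‖v‖ := by
            rw [norm_smul, Real.norm_eq_abs, mul_pow]
        _ = L * ‖v‖^(q+2) / (Nat.factorial (q+1) : ℝ) * |t|^(q+1) := by ring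
        _ ≤ L * ‖v‖^(q+2) / (Nat.factorial (q+1) : ℝ) * t^(q+1) := by
            rw [abs_of_nonneg ht.1]
    -- fencing
    set B : ℝ → ℝ := fun t => L * ‖v‖^(q+2) / (Nat.factorial (q+2) : ℝ) * t^(q+2) with hB
    have hB' : ∀ t : ℝ, HasDerivAt B
        (L * ‖v‖^(q+2) / (Nat.factorial (q+1) : ℝ) * t^(q+1)) t := by
      intro t
      have := (hasDerivAt_pow (q+2) t).const_mul (L * ‖v‖^(q+2) / (Nat.factorial (q+2) : ℝ))
      refine this.congr_deriv (Eq.symm ?_)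
      have h6 : (0:ℝ) < (Nat.factorial (q+1) : ℝ) := by exact_mod_cast Nat.factorial_pos _
      have h7 : ((Nat.factorial (q+2) : ℝ)) = ((q:ℝ)+2) * (Nat.factorial (q+1) : ℝ) := by
        rw [show q + 2 = (q+1) + 1 by ring, Nat.factorial_succ]
        push_cast; ring
      rw [h7]
      have h8 : (q:ℝ) + 2 > 0 := by positivity
      field_simp
      rw [show q + 2 - 1 = q + 1 by omega]
      push_cast
      ring
    have main := image_norm_le_of_norm_deriv_right_le_deriv_boundary
      (f := φ) (a := 0) (b := 1) (f' := ψ)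
      (fun t _ => ((hφ' t).continuousAt).continuousWithinAt)
      (fun t _ => (hφ' t).hasDerivWithinAt)
      (B := B) (B' := fun t => L * ‖v‖^(q+2) / (Nat.factorial (q+1) : ℝ) * t^(q+1))
      (by
        have : φ 0 = 0 := by
          rw [hφ]
          simp only [zero_smul, add_zero]
          rw [Finset.sum_eq_single 0]
          · simp [hc, iteratedFDeriv_zero_apply]
          · intro i _ hi
            rw [zero_pow hi, zero_div, zero_smul]
          · intro h; simp at h
        rw [this, hB]
        simp)
      hB'
      (fun t ht => hbound t ⟨ht.1, ht.2.le⟩)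
    have final := main (Set.right_mem_Icc.mpr zero_le_one)
    rw [hφ, hB] at final
    simp only [one_smul, one_pow, mul_one] at final
    calc ‖f (x + v) - ∑ i ∈ range (q+1+1),
          ((Nat.factorial i : ℝ))⁻¹ • iteratedFDeriv ℝ i f x (fun _ => v)‖
        = ‖f (x + v) - ∑ i ∈ range (q+2), ((1:ℝ) / (Nat.factorial i : ℝ)) • c i‖ := by
          congr 1
          congr 1
          apply Finset.sum_congr rfl
          intro i _
          rw [one_div]
      _ ≤ L * ‖v‖^(q+2) / (Nat.factorial (q+2) : ℝ) := final
      _ = L * ‖v‖^(q+1+1) / (Nat.factorial (q+1+1) : ℝ) := by norm_num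

end Taylor

section Lip
variable {E : Type} [NormedAddCommGroup E] [NormedSpace ℝ E]

lemma lip_fderiv {F : Type} [NormedAddCommGroup F] [NormedSpace ℝ F]
    (f : E → F) (L : ℝ) (n : ℕ)
    (h : ∀ x y, ‖iteratedFDeriv ℝ (n+1) f x - iteratedFDeriv ℝ (n+1) f y‖ ≤ L * ‖x - y‖) :
    ∀ x y, ‖iteratedFDeriv ℝ n (fderiv ℝ f) x - iteratedFDeriv ℝ n (fderiv ℝ f) y‖ ≤ L * ‖x - y‖ := by
  intro x' y'
  have e : ∀ z, iteratedFDeriv ℝ (n+1) f z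
      = (continuousMultilinearCurryRightEquiv' ℝ n E F).symm (iteratedFDeriv ℝ n (fderiv ℝ f) z) := by
    intro z
    rw [iteratedFDeriv_succ_eq_comp_right]
    rfl
  have := h x' y'
  rw [e, e, ← LinearIsometryEquiv.map_sub, LinearIsometryEquiv.norm_map] at this
  exact this

lemma sq_rpow_half (a : ℝ) (ha : 0 ≤ a) (p : ℕ) : (a^2) ^ ((p:ℝ)/2) = a^p := by
  rw [← Real.rpow_natCast a 2, ← Real.rpow_mul ha, ← Real.rpow_natCast a p]
  congr 1
  push_cast
  ring
end Lip

section Ident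
variable {E : Type} [NormedAddCommGroup E] [InnerProductSpace ℝ E]

lemma descent_ident (a b c w : E) :
    ‖a - w - c‖^2 = ‖a - w - b‖^2 + ‖a - c‖^2 - ‖a - b‖^2
      - 2 * (inner ℝ (b - c) w : ℝ) := by
  have h1 : a - w - c = (a - c) - w := by abel
  have h2 : a - w - b = (a - b) - w := by abel
  have e1 : ‖(a - c) - w‖^2 = ‖a - c‖^2 - 2*(inner ℝ (a - c) w : ℝ) + ‖w‖^2 :=
    norm_sub_sq_real _ _
  have e2 : ‖(a - b) - w‖^2 = ‖a - b‖^2 - 2*(inner ℝ (a - b) w : ℝ) + ‖w‖^2 :=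
    norm_sub_sq_real _ _
  rw [h1, h2, e1, e2]
  have h3 : (inner ℝ (a - c) w : ℝ) - inner ℝ (a - b) w = inner ℝ (b - c) w := by
    rw [← inner_sub_left]
    congr 1
    abel
  linarith [h3]
end Ident

lemma hasFDerivAt_taylorApprox {d : ℕ} {p : ℕ} (A : EuclideanSpace ℝ (Fin d) → ℝ)
    (hA : ContDiff ℝ ((p : ℕ) : WithTop ℕ∞) A) (z y₀ : EuclideanSpace ℝ (Fin d)) :
    HasFDerivAt (fun y => taylorApprox p A z y)
      (∑ j ∈ range p, ((Nat.factorial j : ℝ))⁻¹ •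
        (iteratedFDeriv ℝ j (fderiv ℝ A) z (fun _ => y₀ - z))) y₀ := by
  have hv : True := trivial
  -- derivative of each term
  have hterm : ∀ i, i ∈ range (p+1) → HasFDerivAt
      (fun y : EuclideanSpace ℝ (Fin d) => (1 / (Nat.factorial i : ℝ)) * iteratedFDeriv ℝ i A z (fun _ => y - z))
      ((1 / (Nat.factorial i : ℝ)) •
        ((iteratedFDeriv ℝ i A z).linearDeriv (fun _ => y₀ - z)).comp
          (ContinuousLinearMap.pi (fun _ : Fin i => ContinuousLinearMap.id ℝ (EuclideanSpace ℝ (Fin d))))) y₀ := by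
    intro i _
    have h1 : HasFDerivAt (fun y : EuclideanSpace ℝ (Fin d) => (fun _ : Fin i => y - z))
        (ContinuousLinearMap.pi (fun _ : Fin i => ContinuousLinearMap.id ℝ (EuclideanSpace ℝ (Fin d)))) y₀ := by
      apply hasFDerivAt_pi.mpr
      intro j
      simpa using hasFDerivAt_sub_const (x := y₀) z
    have h2 := ((iteratedFDeriv ℝ i A z).hasFDerivAt (x := fun _ : Fin i => y₀ - z)).comp y₀ h1
    exact h2.const_mul _
  have hsum := HasFDerivAt.fun_sum hterm
  -- identify the sum of derivatives
  have hmatch : ∑ i ∈ range (p+1), ((1 / (Nat.factorial i : ℝ)) •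
        ((iteratedFDeriv ℝ i A z).linearDeriv (fun _ => y₀ - z)).comp
          (ContinuousLinearMap.pi (fun _ : Fin i => ContinuousLinearMap.id ℝ (EuclideanSpace ℝ (Fin d)))))
      = ∑ j ∈ range p, ((Nat.factorial j : ℝ))⁻¹ •
          (iteratedFDeriv ℝ j (fderiv ℝ A) z (fun _ => y₀ - z)) := by
    rw [Finset.sum_range_succ']
    have h0 : ((1 / (Nat.factorial 0 : ℝ)) •
        ((iteratedFDeriv ℝ 0 A z).linearDeriv (fun _ => y₀ - z)).comp
          (ContinuousLinearMap.pi (fun _ : Fin 0 => ContinuousLinearMap.id ℝ (EuclideanSpace ℝ (Fin d))))) = 0 := by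
      apply ContinuousLinearMap.ext
      intro w
      simp [ContinuousMultilinearMap.linearDeriv_apply]
    rw [h0, add_zero]
    apply Finset.sum_congr rfl
    intro j hj
    apply ContinuousLinearMap.ext
    intro w
    have hji : ((j + 1 : ℕ) : WithTop ℕ∞) ≤ ((p : ℕ) : WithTop ℕ∞) := by
      exact_mod_cast Nat.succ_le_of_lt (Finset.mem_range.mp hj)
    have hAj : ContDiff ℝ ((j + 1 : ℕ) : WithTop ℕ∞) A := hA.of_le hji
    have hupd : ∀ k : Fin (j+1), iteratedFDeriv ℝ (j+1) A z (Function.update (fun _ => y₀ - z) k w)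
        = iteratedFDeriv ℝ (j+1) A z (Fin.snoc (fun _ => y₀ - z) w) := fun k =>
      symm_diag j A hAj z (y₀ - z) w k
    simp only [ContinuousLinearMap.coe_smul', Pi.smul_apply, ContinuousLinearMap.coe_comp',
      Function.comp_apply, ContinuousLinearMap.coe_pi, ContinuousLinearMap.coe_id]
    rw [show (ContinuousLinearMap.pi (fun _ : Fin (j+1) => ContinuousLinearMap.id ℝ (EuclideanSpace ℝ (Fin d)))) w
        = (fun _ : Fin (j+1) => w) from rfl]
    rw [ContinuousMultilinearMap.linearDeriv_apply]
    have : ∑ k : Fin (j+1), iteratedFDeriv ℝ (j+1) A z (Function.update (fun _ => y₀ - z) k ((fun _ : Fin (j+1) => w) k))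
        = (j+1 : ℝ) * iteratedFDeriv ℝ (j+1) A z (Fin.snoc (fun _ => y₀ - z) w) := by
      rw [Finset.sum_congr rfl (fun k _ => hupd k)]
      rw [Finset.sum_const, Finset.card_univ, Fintype.card_fin]
      push_cast
      rw [nsmul_eq_mul]
      push_cast
      ring
    rw [this]
    have hsucc : iteratedFDeriv ℝ (j+1) A z (Fin.snoc (fun _ => y₀ - z) w)
        = (iteratedFDeriv ℝ j (fderiv ℝ A) z (fun _ => y₀ - z)) w := by
      rw [iteratedFDeriv_succ_apply_right, Fin.init_snoc, Fin.snoc_last]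
    rw [hsucc]
    rw [Nat.factorial_succ]
    push_cast
    have hfj : (0:ℝ) < (Nat.factorial j : ℝ) := by exact_mod_cast Nat.factorial_pos j
    rw [smul_eq_mul]
    field_simp
    rw [smul_eq_mul, ← mul_assoc, mul_one_div_cancel hfj.ne', one_mul]
  rw [hmatch] at hsum
  exact hsum

section Aux
variable {E : Type} [NormedAddCommGroup E] [InnerProductSpace ℝ E]

lemma hasFDerivAt_norm_pow (q : ℕ) (z y₀ : E) :
    HasFDerivAt (fun y => ‖y - z‖^(q+2))
      ((((q:ℝ)+2) * ‖y₀ - z‖^q) • innerSL ℝ (y₀ - z)) y₀ := by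
  by_cases hu : y₀ - z = 0
  · have hy : y₀ = z := by rwa [sub_eq_zero] at hu
    have hz : ((((q:ℝ)+2) * ‖y₀ - z‖^q) • innerSL ℝ (y₀ - z)) = 0 := by
      rw [hu, map_zero, smul_zero]
    rw [hz, hasFDerivAt_iff_isLittleO_nhds_zero]
    have h1 : (fun h : E => ‖h‖^(q+2)) =o[nhds 0] (fun h => h) :=
      Asymptotics.isLittleO_norm_pow_id (by omega)
    subst hy
    simpa [add_sub_cancel_left, zero_pow] using h1
  · have hpos : (0:ℝ) < ‖y₀ - z‖ := norm_pos_iff.mpr hu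
    have H : HasFDerivAt (fun y : E => ‖y - z‖^2) ((2:ℝ) • innerSL ℝ (y₀ - z)) y₀ := by
      have h1 := (hasStrictFDerivAt_norm_sq (y₀ - z)).hasFDerivAt
      have h2 := h1.comp y₀ (hasFDerivAt_sub_const (x := y₀) z)
      refine h2.congr_fderiv ?_
      ext w
      simp [two_smul]
    set m : ℝ := ((q:ℝ)+2)/2 with hm
    have hφ : HasDerivAt (fun s : ℝ => s ^ m) (m * (‖y₀ - z‖^2) ^ (m - 1)) (‖y₀ - z‖^2) :=
      Real.hasDerivAt_rpow_const (Or.inl (by positivity))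
    have hcomp := hφ.comp_hasFDerivAt y₀ H
    have hfun : (fun y : E => (‖y - z‖^2) ^ m) = (fun y : E => ‖y - z‖^(q+2)) := by
      funext y
      rw [← Real.rpow_natCast ‖y - z‖ 2, ← Real.rpow_mul (norm_nonneg _),
        ← Real.rpow_natCast ‖y - z‖ (q+2)]
      congr 1
      push_cast
      ring
    have hcomp' : HasFDerivAt (fun y : E => (‖y - z‖^2) ^ m)
        ((m * (‖y₀ - z‖^2) ^ (m - 1)) • ((2:ℝ) • innerSL ℝ (y₀ - z))) y₀ := hcomp
    rw [hfun] at hcomp'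
    convert hcomp' using 1
    rw [smul_smul]
    congr 1
    have e1 : (‖y₀ - z‖^2 : ℝ) ^ (m - 1) = ‖y₀ - z‖ ^ (q : ℕ) := by
      rw [← Real.rpow_natCast ‖y₀ - z‖ 2, ← Real.rpow_mul (norm_nonneg _),
        ← Real.rpow_natCast ‖y₀ - z‖ q]
      congr 1
      rw [hm]
      push_cast
      ring
    rw [e1]
    ring

lemma convex_tangent_le (A : E → ℝ) (hconv : ConvexOn ℝ Set.univ A)
    (hdiff : Differentiable ℝ A) (a b : E) :
    A a + fderiv ℝ A a (b - a) ≤ A b := by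
  set q : ℝ → ℝ := fun s => A (a + s • (b - a)) with hq
  have hqconv : ConvexOn ℝ Set.univ q := by
    have := hconv.comp_affineMap (AffineMap.lineMap a b)
    have he : (Set.univ : Set ℝ) ⊆ (AffineMap.lineMap a b) ⁻¹' Set.univ := fun _ _ => trivial
    refine ConvexOn.subset ?_ he (convex_univ)
    refine this.congr ?_
    intro s _
    simp [hq, AffineMap.lineMap_apply, add_comm]
  have hline : ∀ s : ℝ, HasDerivAt (fun s : ℝ => a + s • (b - a)) (b - a) s := by
    intro s
    simpa using ((hasDerivAt_id s).smul_const (b - a)).const_add a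
  have hq' : HasDerivAt q (fderiv ℝ A a (b - a)) 0 := by
    have := (hdiff (a + (0:ℝ) • (b - a))).hasFDerivAt.comp_hasDerivAt 0 (hline 0)
    simp only [zero_smul, add_zero] at this
    exact this
  have hslope := hqconv.le_slope_of_hasDerivAt (Set.mem_univ 0) (Set.mem_univ 1)
    zero_lt_one hq'
  have : slope q 0 1 = A b - A a := by
    rw [slope_def_field]
    simp [hq]
  rw [this] at hslope
  linarith
end Aux

theorem tensor_extragradient_rate {d : ℕ} (p : ℕ) (hp : 2 ≤ p)
    (A : EuclideanSpace ℝ (Fin d) → ℝ)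
    (hA : ContDiff ℝ (p : ℕ∞) A) (hconv : ConvexOn ℝ Set.univ A)
    (L M : ℝ) (hL : 0 < L)
    (hLip : ∀ x y : EuclideanSpace ℝ (Fin d),
      ‖iteratedFDeriv ℝ p A x - iteratedFDeriv ℝ p A y‖ ≤ L * ‖x - y‖)
    (hM : L ≤ M)
    (xs : EuclideanSpace ℝ (Fin d)) (hmin : IsMinOn A Set.univ xs)
    (T : ℕ) (hT : 1 ≤ T)
    (x xhalf : ℕ → EuclideanSpace ℝ (Fin d))
    (hhalf : ∀ t < T, IsMinOn (fun y => taylorApprox p A (x t) y +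
      ((p : ℝ) * M / (Nat.factorial (p + 1) : ℝ)) * ‖y - x t‖ ^ (p + 1)) Set.univ (xhalf t))
    (hstep : ∀ t < T, x (t + 1) = x t -
      (((M / (Nat.factorial (p - 1) : ℝ)) * ‖xhalf t - x t‖ ^ (p - 1))⁻¹) •
        gradient A (xhalf t)) :
    ∃ t < T, ‖gradient A (xhalf t)‖ ≤
      ((p : ℝ) ^ p * M ^ p /
          ((Nat.factorial p : ℝ) * ((p : ℝ) * M - L) ^ ((p : ℝ) / 2) *
            ((p : ℝ) * M + L) ^ ((p : ℝ) / 2 - 1))) *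
        ‖x 0 - xs‖ ^ p / (T : ℝ) ^ ((p : ℝ) / 2) := by
  obtain ⟨q, rfl⟩ : ∃ q, p = q + 2 := ⟨p - 2, by omega⟩
  have hM0 : (0:ℝ) < M := lt_of_lt_of_le hL hM
  have hq2 : ((q+2:ℕ):ℝ) = (q:ℝ) + 2 := by push_cast; ring
  have hS0 : (0:ℝ) < ((q+2:ℕ):ℝ) * M := by rw [hq2]; positivity
  have hSL : L < ((q+2:ℕ):ℝ) * M := by
    rw [hq2]
    nlinarith [Nat.cast_nonneg (α := ℝ) q]
  set S : ℝ := ((q+2:ℕ):ℝ) * M with hSdef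
  set cdec : ℝ := 1 - (L / S)^2 with hcdec
  have hcd0 : 0 < cdec := by
    rw [hcdec]
    have h1 : L / S < 1 := (div_lt_one hS0).mpr hSL
    have h2 : 0 < L / S := by positivity
    nlinarith
  have hA' : ContDiff ℝ (((q+2:ℕ)) : WithTop ℕ∞) A := by exact_mod_cast hA
  have hAdiff : Differentiable ℝ A :=
    hA'.differentiable (by simp)
  have hgC : ContDiff ℝ (((q+1:ℕ)) : WithTop ℕ∞) (fderiv ℝ A) :=
    hA'.fderiv_right (by exact_mod_cast le_refl _)
  have hgrad_def : ∀ y, gradient A y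
      = (InnerProductSpace.toDual ℝ (EuclideanSpace ℝ (Fin d))).symm (fderiv ℝ A y) :=
    fun _ => rfl
  have hfactpos1 : (0:ℝ) < ((q+1).factorial : ℝ) := by exact_mod_cast Nat.factorial_pos _
  have hfactpos2 : (0:ℝ) < ((q+2).factorial : ℝ) := by exact_mod_cast Nat.factorial_pos _
  have hfact2 : ((q+2).factorial : ℝ) = ((q+2:ℕ):ℝ) * ((q+1).factorial:ℝ) := by
    rw [show q+2 = (q+1)+1 from rfl, Nat.factorial_succ]
    push_cast
    ring
  have hfact3 : ((q+2+1).factorial : ℝ) = ((q+3:ℕ):ℝ) * ((q+2).factorial:ℝ) := by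
    rw [Nat.factorial_succ]
    push_cast
    ring
  have key : ∀ t, t < T →
      ‖gradient A (xhalf t)‖ ≤ (S + L) / ((q+2).factorial : ℝ) * ‖xhalf t - x t‖^(q+2)
      ∧ ‖x (t+1) - xs‖^2 ≤ ‖x t - xs‖^2 - cdec * ‖xhalf t - x t‖^2 := by
    intro t ht
    set TayS := ∑ j ∈ range (q+2), ((Nat.factorial j:ℝ))⁻¹ •
        iteratedFDeriv ℝ j (fderiv ℝ A) (x t) (fun _ => xhalf t - x t) with hTayS
    -- Taylor remainder for the derivative
    have hrem : ‖fderiv ℝ A (xhalf t) - TayS‖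
        ≤ L * ‖xhalf t - x t‖^(q+2) / ((q+2).factorial : ℝ) := by
      have h0 := taylor_rem (q+1) (fderiv ℝ A) hgC hL.le
        (lip_fderiv A L (q+1) hLip) (x t) (xhalf t - x t)
      rw [show x t + (xhalf t - x t) = xhalf t by abel] at h0
      exact h0
    -- optimality of the model minimizer
    have hTayD := hasFDerivAt_taylorApprox (p := q+2) A hA' (x t) (xhalf t)
    have hRegD := (hasFDerivAt_norm_pow (q+1) (x t) (xhalf t)).const_mul
      (S / ((q+2+1).factorial : ℝ))
    have hmodelD := hTayD.add hRegD
    have hloc : IsLocalMin (fun y => taylorApprox (q+2) A (x t) y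
        + S / ((q+2+1).factorial:ℝ) * ‖y - x t‖^(q+2+1)) (xhalf t) :=
      (hhalf t ht).isLocalMin Filter.univ_mem
    have hzero := hloc.hasFDerivAt_eq_zero hmodelD
    have hTayEq : TayS = -(((S / ((q+2).factorial:ℝ)) * ‖xhalf t - x t‖^(q+1)) •
        innerSL ℝ (xhalf t - x t)) := by
      have h5 := eq_neg_of_add_eq_zero_left hzero
      rw [hTayS, h5, smul_smul, neg_inj]
      congr 1
      rw [hfact3]
      have h6 : ((q+1:ℕ):ℝ) + 2 = ((q+3:ℕ):ℝ) := by push_cast; ring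
      rw [h6]
      have h7 : ((q+3:ℕ):ℝ) ≠ 0 := by positivity
      field_simp
    -- norm bounds
    have hTaynorm : ‖TayS‖
        = S / ((q+2).factorial:ℝ) * ‖xhalf t - x t‖^(q+1) * ‖xhalf t - x t‖ := by
      rw [hTayEq, norm_neg, norm_smul, innerSL_apply_norm, Real.norm_eq_abs,
        abs_of_nonneg (by positivity)]
    have hgn : ‖gradient A (xhalf t)‖ = ‖fderiv ℝ A (xhalf t)‖ := by
      rw [hgrad_def]
      exact LinearIsometryEquiv.norm_map _ _
    have part1 : ‖gradient A (xhalf t)‖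
        ≤ (S + L) / ((q+2).factorial:ℝ) * ‖xhalf t - x t‖^(q+2) := by
      rw [hgn]
      have h8 : ‖fderiv ℝ A (xhalf t)‖ ≤ ‖fderiv ℝ A (xhalf t) - TayS‖ + ‖TayS‖ := by
        have := norm_add_le (fderiv ℝ A (xhalf t) - TayS) TayS
        rwa [sub_add_cancel] at this
      have h9 : L * ‖xhalf t - x t‖^(q+2) / ((q+2).factorial:ℝ)
          + S / ((q+2).factorial:ℝ) * ‖xhalf t - x t‖^(q+1) * ‖xhalf t - x t‖
          = (S + L) / ((q+2).factorial:ℝ) * ‖xhalf t - x t‖^(q+2) := by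
        field_simp
        ring
      rw [hTaynorm] at h8
      linarith [hrem]
    refine ⟨part1, ?_⟩
    by_cases hr0 : xhalf t - x t = 0
    · have hg0 : gradient A (xhalf t) = 0 := by
        have h10 := part1
        rw [hr0] at h10
        simp only [norm_zero, zero_pow (by omega : q + 2 ≠ 0), mul_zero] at h10
        exact norm_le_zero_iff.mp h10
      rw [hstep t ht, hg0, smul_zero, sub_zero, hr0]
      simp
    · have hrpos : 0 < ‖xhalf t - x t‖ := norm_pos_iff.mpr hr0
      have hq21 : q + 2 - 1 = q + 1 := rfl
      set lam : ℝ := (M / ((q + 2 - 1).factorial : ℝ) * ‖xhalf t - x t‖ ^ (q + 2 - 1))⁻¹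
        with hlam
      rw [hq21] at hlam
      have hlampos : 0 < lam := by
        rw [hlam]
        exact inv_pos.mpr (mul_pos (div_pos hM0 hfactpos1) (pow_pos hrpos _))
      set G := gradient A (xhalf t) with hG
      set c2 : ℝ := S / ((q+2).factorial:ℝ) * ‖xhalf t - x t‖^(q+1) with hc2
      have hrne : ‖xhalf t - x t‖^(q+1) ≠ 0 := (pow_pos hrpos _).ne'
      have hlc : lam * c2 = 1 := by
        rw [hlam, hc2, hSdef, hfact2]
        field_simp
      -- Riesz vector of TayS
      have hvT : (InnerProductSpace.toDual ℝ (EuclideanSpace ℝ (Fin d))).symm TayS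
          = -(c2 • (xhalf t - x t)) := by
        rw [hTayEq, map_neg, map_smul, hc2]
        congr 2
        have h11 : innerSL ℝ (xhalf t - x t)
            = (InnerProductSpace.toDual ℝ (EuclideanSpace ℝ (Fin d))) (xhalf t - x t) := by
          ext w
          rw [InnerProductSpace.toDual_apply_apply]
          rfl
        rw [h11, LinearIsometryEquiv.symm_apply_apply]
      have hGdiff : ‖G - (-(c2 • (xhalf t - x t)))‖
          ≤ L * ‖xhalf t - x t‖^(q+2) / ((q+2).factorial:ℝ) := by
        rw [← hvT, hG, hgrad_def, ← map_sub, LinearIsometryEquiv.norm_map]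
        exact hrem
      have hlamvT : lam • (-(c2 • (xhalf t - x t))) = -(xhalf t - x t) := by
        rw [smul_neg, smul_smul, hlc, one_smul]
      have hxd : x (t+1) - xhalf t = lam • ((-(c2 • (xhalf t - x t))) - G) := by
        rw [hstep t ht, smul_sub, hlamvT]
        abel
      have hxnorm : ‖x (t+1) - xhalf t‖ ≤ L / S * ‖xhalf t - x t‖ := by
        rw [hxd, norm_smul, Real.norm_eq_abs, abs_of_pos hlampos, norm_sub_rev]
        have h12 : lam * ‖G - (-(c2 • (xhalf t - x t)))‖
            ≤ lam * (L * ‖xhalf t - x t‖^(q+2) / ((q+2).factorial:ℝ)) :=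
          mul_le_mul_of_nonneg_left hGdiff hlampos.le
        have h13 : lam * (L * ‖xhalf t - x t‖^(q+2) / ((q+2).factorial:ℝ))
            = L / S * ‖xhalf t - x t‖ := by
          rw [hlam, hSdef, hfact2, show q+2 = (q+1)+1 from rfl, pow_succ]
          field_simp
          ring
        linarith
      have hident := descent_ident (x t) (xhalf t) xs (lam • G)
      rw [show x t - lam • G = x (t+1) from (hstep t ht).symm] at hident
      have hip : 0 ≤ (inner ℝ (xhalf t - xs) (lam • G) : ℝ) := by
        rw [real_inner_smul_right]
        apply mul_nonneg hlampos.le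
        have h7 : (inner ℝ (xhalf t - xs) G : ℝ) = fderiv ℝ A (xhalf t) (xhalf t - xs) := by
          rw [real_inner_comm, hG, hgrad_def]
          exact InnerProductSpace.toDual_symm_apply
        rw [h7]
        have h8 := convex_tangent_le A hconv hAdiff (xhalf t) xs
        have h9 : A xs ≤ A (xhalf t) := hmin (Set.mem_univ _)
        have h10 : fderiv ℝ A (xhalf t) (xs - xhalf t) ≤ 0 := by linarith
        have h11 : xhalf t - xs = -(xs - xhalf t) := by abel
        rw [h11, map_neg]
        linarith
      have hsq : ‖x (t+1) - xhalf t‖^2 ≤ (L/S)^2 * ‖xhalf t - x t‖^2 := by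
        have h14 := pow_le_pow_left₀ (norm_nonneg _) hxnorm 2
        rwa [mul_pow] at h14
      have hnr : ‖x t - xhalf t‖ = ‖xhalf t - x t‖ := norm_sub_rev _ _
      rw [hnr] at hident
      rw [hcdec]
      nlinarith [hident, hsq, hip]
  -- telescoping
  have htel : ∀ n, n ≤ T →
      ∑ t ∈ range n, cdec * ‖xhalf t - x t‖^2 + ‖x n - xs‖^2 ≤ ‖x 0 - xs‖^2 := by
    intro n
    induction n with
    | zero => intro _; simp
    | succ n ih =>
      intro hn
      have h1 := ih (by omega)
      have h2 := (key n (by omega)).2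
      rw [Finset.sum_range_succ]
      linarith
  -- pick the minimizing index
  obtain ⟨t0, ht0, hmin0⟩ := Finset.exists_min_image (range T)
    (fun t => ‖xhalf t - x t‖^2) ⟨0, Finset.mem_range.mpr hT⟩
  have ht0T : t0 < T := Finset.mem_range.mp ht0
  have hsum_ge : (T:ℝ) * ‖xhalf t0 - x t0‖^2 ≤ ∑ t ∈ range T, ‖xhalf t - x t‖^2 := by
    have := Finset.card_nsmul_le_sum (range T) (fun t => ‖xhalf t - x t‖^2)
      (‖xhalf t0 - x t0‖^2) (fun t ht => hmin0 t ht)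
    rwa [Finset.card_range, nsmul_eq_mul] at this
  have hTpos : (0:ℝ) < (T:ℝ) := by exact_mod_cast hT
  have hr2 : ‖xhalf t0 - x t0‖^2 ≤ ‖x 0 - xs‖^2 / (cdec * T) := by
    rw [le_div_iff₀ (by positivity)]
    have h1 := htel T le_rfl
    have h2 : ∑ t ∈ range T, cdec * ‖xhalf t - x t‖^2
        = cdec * ∑ t ∈ range T, ‖xhalf t - x t‖^2 := by rw [Finset.mul_sum]
    have h3 : cdec * ((T:ℝ) * ‖xhalf t0 - x t0‖^2) ≤ cdec * ∑ t ∈ range T, ‖xhalf t - x t‖^2 :=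
      mul_le_mul_of_nonneg_left hsum_ge hcd0.le
    nlinarith [sq_nonneg ‖x T - xs‖, norm_nonneg (x T - xs), sq_nonneg (‖x T - xs‖)]
  -- final bound
  refine ⟨t0, ht0T, ?_⟩
  have hb := (key t0 ht0T).1
  have hpow : ‖xhalf t0 - x t0‖^(q+2)
      = (‖xhalf t0 - x t0‖^2) ^ (((q+2:ℕ):ℝ)/2) :=
    (sq_rpow_half _ (norm_nonneg _) (q+2)).symm
  have hmono : (‖xhalf t0 - x t0‖^2) ^ (((q+2:ℕ):ℝ)/2)
      ≤ (‖x 0 - xs‖^2 / (cdec * T)) ^ (((q+2:ℕ):ℝ)/2) :=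
    Real.rpow_le_rpow (sq_nonneg _) hr2 (by positivity)
  have hCpos : 0 ≤ (S + L) / ((q+2).factorial : ℝ) := by positivity
  have hchain : ‖gradient A (xhalf t0)‖
      ≤ (S + L) / ((q+2).factorial : ℝ) * (‖x 0 - xs‖^2 / (cdec * T)) ^ (((q+2:ℕ):ℝ)/2) := by
    calc ‖gradient A (xhalf t0)‖
        ≤ (S + L) / ((q+2).factorial : ℝ) * ‖xhalf t0 - x t0‖^(q+2) := hb
      _ = (S + L) / ((q+2).factorial : ℝ) * (‖xhalf t0 - x t0‖^2) ^ (((q+2:ℕ):ℝ)/2) := by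
          rw [hpow]
      _ ≤ _ := mul_le_mul_of_nonneg_left hmono hCpos
  refine hchain.trans (le_of_eq ?_)
  -- the constant arithmetic
  have hSL' : (0:ℝ) < S - L := sub_pos.mpr hSL
  have hSLp : (0:ℝ) < S + L := by positivity
  have hF : (0:ℝ) < ((q+2).factorial : ℝ) := by exact_mod_cast Nat.factorial_pos _
  have hcd : cdec = (S - L) * (S + L) / S^2 := by
    rw [hcdec]
    field_simp
    ring
  have h1 : (‖x 0 - xs‖^2 / (cdec * T)) ^ (((q+2:ℕ):ℝ)/2)
      = ‖x 0 - xs‖^(q+2) / (cdec^(((q+2:ℕ):ℝ)/2) * (T:ℝ)^(((q+2:ℕ):ℝ)/2)) := by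
    rw [Real.div_rpow (by positivity) (by positivity),
      Real.mul_rpow hcd0.le hTpos.le, sq_rpow_half _ (norm_nonneg _)]
  have h2 : cdec^(((q+2:ℕ):ℝ)/2)
      = (S-L)^(((q+2:ℕ):ℝ)/2) * (S+L)^(((q+2:ℕ):ℝ)/2) / S^(q+2) := by
    rw [hcd, Real.div_rpow (by positivity) (by positivity),
      Real.mul_rpow hSL'.le hSLp.le, sq_rpow_half S hS0.le]
  have h3 : (S+L)^((((q+2:ℕ):ℝ))/2-1) = (S+L)^(((q+2:ℕ):ℝ)/2) / (S+L) := by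
    rw [Real.rpow_sub hSLp, Real.rpow_one]
  have h4 : ((q+2:ℕ):ℝ)^(q+2) * M^(q+2) = S^(q+2) := (mul_pow _ _ _).symm
  have ha : (0:ℝ) < (S-L)^(((q+2:ℕ):ℝ)/2) := Real.rpow_pos_of_pos hSL' _
  have hb2 : (0:ℝ) < (S+L)^(((q+2:ℕ):ℝ)/2) := Real.rpow_pos_of_pos hSLp _
  have hc2 : (0:ℝ) < (T:ℝ)^(((q+2:ℕ):ℝ)/2) := Real.rpow_pos_of_pos hTpos _
  have hsp : (0:ℝ) < S^(q+2) := by positivity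
  rw [h1, h2, h3, ← h4]
  field_simp
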